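/- Every natural number N can be written as the sum of three terms of the sequence (⌊n²/4⌋)_{n∈ℕ}, i.e., there exist natural numbers A, B, C with N = ⌊A²/4⌋ + ⌊B²/4⌋ + ⌊C²/4⌋. -/

import Mathlib

open scoped NumberTheorySymbols
def Q2 (α β γ x y : ℤ) : ℤ := α*x^2 + 2*β*x*y + γ*y^2
def Q3 (a b c d e f x y z : ℤ) : ℤ := a*x^2 + d*y^2 + f*z^2 + 2*b*x*y + 2*c*x*z + 2*e*y*z
def B3 (a b c d e f p₁ p₂ p₃ q₁ q₂ q₃ : ℤ) : ℤ :=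
  a*p₁*q₁ + d*p₂*q₂ + f*p₃*q₃ + b*(p₁*q₂ + p₂*q₁) + c*(p₁*q₃ + p₃*q₁) + e*(p₂*q₃ + p₃*q₂)
def det3 (a b c d e f : ℤ) : ℤ := a*d*f + 2*b*c*e - a*e^2 - d*c^2 - f*b^2

lemma transform3 (a b c d e f p₁ p₂ p₃ q₁ q₂ q₃ r₁ r₂ r₃ x y z : ℤ) :
    Q3 (Q3 a b c d e f p₁ p₂ p₃) (B3 a b c d e f p₁ p₂ p₃ q₁ q₂ q₃)
       (B3 a b c d e f p₁ p₂ p₃ r₁ r₂ r₃) (Q3 a b c d e f q₁ q₂ q₃)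
       (B3 a b c d e f q₁ q₂ q₃ r₁ r₂ r₃) (Q3 a b c d e f r₁ r₂ r₃) x y z
    = Q3 a b c d e f (p₁*x + q₁*y + r₁*z) (p₂*x + q₂*y + r₂*z) (p₃*x + q₃*y + r₃*z) := by
  unfold Q3 B3; ring

lemma det3_transform (a b c d e f p₁ p₂ p₃ q₁ q₂ q₃ r₁ r₂ r₃ : ℤ) :
    det3 (Q3 a b c d e f p₁ p₂ p₃) (B3 a b c d e f p₁ p₂ p₃ q₁ q₂ q₃)
       (B3 a b c d e f p₁ p₂ p₃ r₁ r₂ r₃) (Q3 a b c d e f q₁ q₂ q₃)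
       (B3 a b c d e f q₁ q₂ q₃ r₁ r₂ r₃) (Q3 a b c d e f r₁ r₂ r₃)
    = (p₁*(q₂*r₃ - q₃*r₂) - q₁*(p₂*r₃ - p₃*r₂) + r₁*(p₂*q₃ - p₃*q₂))^2
      * det3 a b c d e f := by
  unfold det3 Q3 B3; ring

lemma shear_exists (a b : ℤ) (ha : 0 < a) : ∃ k : ℤ, 2 * |b + a * k| ≤ a := by
  refine ⟨-((2*b + a) / (2*a)), ?_⟩
  have h1 := Int.emod_nonneg (2*b + a) (by omega : (2*a) ≠ 0)
  have h2 := Int.emod_lt_of_pos (2*b + a) (by omega : 0 < 2*a)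
  have h3 := Int.emod_add_mul_ediv (2*b + a) (2*a)
  rcases abs_cases (b + a * -((2 * b + a) / (2 * a))) with ⟨h, _⟩ | ⟨h, _⟩ <;> rw [h] <;> nlinarith

lemma unimod_inj (p₁ p₂ p₃ q₁ q₂ q₃ r₁ r₂ r₃ x y z : ℤ)
    (hdet : p₁*(q₂*r₃ - q₃*r₂) - q₁*(p₂*r₃ - p₃*r₂) + r₁*(p₂*q₃ - p₃*q₂) = 1)
    (h1 : p₁*x + q₁*y + r₁*z = 0) (h2 : p₂*x + q₂*y + r₂*z = 0)
    (h3 : p₃*x + q₃*y + r₃*z = 0) : x = 0 ∧ y = 0 ∧ z = 0 := by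
  refine ⟨?_, ?_, ?_⟩
  · linear_combination (q₂*r₃ - q₃*r₂)*h1 - (q₁*r₃ - q₃*r₁)*h2 + (q₁*r₂ - q₂*r₁)*h3 - x*hdet
  · linear_combination (-(p₂*r₃ - p₃*r₂))*h1 + (p₁*r₃ - p₃*r₁)*h2 - (p₁*r₂ - p₂*r₁)*h3 - y*hdet
  · linear_combination (p₂*q₃ - p₃*q₂)*h1 - (p₁*q₃ - p₃*q₁)*h2 + (p₁*q₂ - p₂*q₁)*h3 - z*hdet

lemma unimod_surj (p₁ p₂ p₃ q₁ q₂ q₃ r₁ r₂ r₃ x y z : ℤ)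
    (hdet : p₁*(q₂*r₃ - q₃*r₂) - q₁*(p₂*r₃ - p₃*r₂) + r₁*(p₂*q₃ - p₃*q₂) = 1) :
    ∃ X Y Z : ℤ, p₁*X + q₁*Y + r₁*Z = x ∧ p₂*X + q₂*Y + r₂*Z = y ∧
      p₃*X + q₃*Y + r₃*Z = z := by
  refine ⟨(q₂*r₃ - q₃*r₂)*x - (q₁*r₃ - q₃*r₁)*y + (q₁*r₂ - q₂*r₁)*z,
          -(p₂*r₃ - p₃*r₂)*x + (p₁*r₃ - p₃*r₁)*y - (p₁*r₂ - p₂*r₁)*z,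
          (p₂*q₃ - p₃*q₂)*x - (p₁*q₃ - p₃*q₁)*y + (p₁*q₂ - p₂*q₁)*z, ?_, ?_, ?_⟩
  · linear_combination x*hdet
  · linear_combination y*hdet
  · linear_combination z*hdet

lemma Q3_e1 (a b c d e f : ℤ) : Q3 a b c d e f 1 0 0 = a := by unfold Q3; ring

open scoped Classical in
lemma bin_min (α β γ : ℤ) (hpos : ∀ x y : ℤ, ¬(x = 0 ∧ y = 0) → 0 < Q2 α β γ x y) :
    ∃ (m x₀ y₀ : ℤ), ¬(x₀ = 0 ∧ y₀ = 0) ∧ Q2 α β γ x₀ y₀ = m ∧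
      (∀ x y : ℤ, ¬(x = 0 ∧ y = 0) → m ≤ Q2 α β γ x y) := by
  have hP : ∃ k : ℕ, ∃ x y : ℤ, ¬(x = 0 ∧ y = 0) ∧ Q2 α β γ x y = (k : ℤ) := by
    have h := hpos 1 0 (by simp)
    exact ⟨(Q2 α β γ 1 0).toNat, 1, 0, by simp, (Int.toNat_of_nonneg h.le).symm⟩
  obtain ⟨x₀, y₀, hne, hval⟩ := Nat.find_spec hP
  refine ⟨(Nat.find hP : ℤ), x₀, y₀, hne, hval, ?_⟩
  intro x y hxy
  have hv := hpos x y hxy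
  have : Nat.find hP ≤ (Q2 α β γ x y).toNat :=
    Nat.find_min' hP ⟨x, y, hxy, (Int.toNat_of_nonneg hv.le).symm⟩
  omega

lemma bin_key (α β γ : ℤ) (hpos : ∀ x y : ℤ, ¬(x = 0 ∧ y = 0) → 0 < Q2 α β γ x y) :
    ∃ m₂ b2 c2 : ℤ, 0 < m₂ ∧ 2*|b2| ≤ m₂ ∧ m₂ ≤ c2 ∧ m₂*c2 - b2^2 = α*γ - β^2 ∧
      (∃ x y : ℤ, ¬(x = 0 ∧ y = 0) ∧ Q2 α β γ x y = m₂) ∧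
      (∀ x y : ℤ, ∃ X Y : ℤ, Q2 α β γ x y = Q2 m₂ b2 c2 X Y) := by
  obtain ⟨m, x₀, y₀, hne, hval, hmin⟩ := bin_min α β γ hpos
  have hm : 0 < m := hval ▸ hpos x₀ y₀ hne
  have hg : Int.gcd x₀ y₀ = 1 := by
    set g : ℕ := Int.gcd x₀ y₀ with hgdef
    have hg0 : g ≠ 0 := fun h => hne (Int.gcd_eq_zero_iff.mp (hgdef ▸ h))
    obtain ⟨x₁, hx₁⟩ : (g:ℤ) ∣ x₀ := Int.gcd_dvd_left x₀ y₀
    obtain ⟨y₁, hy₁⟩ : (g:ℤ) ∣ y₀ := Int.gcd_dvd_right x₀ y₀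
    have h1 : ¬(x₁ = 0 ∧ y₁ = 0) := by
      rintro ⟨rfl, rfl⟩; simp at hx₁ hy₁; tauto
    have h2 : m ≤ Q2 α β γ x₁ y₁ := hmin _ _ h1
    have h3 : Q2 α β γ x₀ y₀ = (g:ℤ)^2 * Q2 α β γ x₁ y₁ := by
      rw [hx₁, hy₁]; unfold Q2; ring
    have hg1 : (1:ℤ) ≤ (g:ℤ) := by exact_mod_cast Nat.one_le_iff_ne_zero.mpr hg0
    have h4 : (g:ℤ)^2 * m ≤ (g:ℤ)^2 * Q2 α β γ x₁ y₁ :=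
      mul_le_mul_of_nonneg_left h2 (by positivity)
    have h6 : (g:ℤ)^2 * m ≤ m := by rw [hval] at h3; linarith [h3 ▸ h4]
    have h8 : (g:ℤ)^2 ≤ 1 := by nlinarith [hm, h6]
    have h7 : (g:ℤ) = 1 := by nlinarith [hg1, h8]
    exact_mod_cast h7
  obtain ⟨u, v, huv⟩ := Int.isCoprime_iff_gcd_eq_one.mpr hg
  set b' : ℤ := α*x₀*(-v) + β*(x₀*u + (-v)*y₀) + γ*y₀*u with hb'
  obtain ⟨k, hk⟩ := shear_exists m b' hm
  set q := x₀*k - v with hq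
  set s := y₀*k + u with hs
  set b2 := b' + m*k with hb2
  set c2 := Q2 α β γ q s with hc2
  have hcol2 : ¬(q = 0 ∧ s = 0) := by
    rintro ⟨h1, h2⟩
    rw [hq] at h1; rw [hs] at h2
    have hv' : v = x₀ * k := by linarith
    have hu' : u = -(y₀ * k) := by linarith
    rw [hv', hu'] at huv
    have : (0:ℤ) = 1 := by linear_combination huv
    exact absurd this (by norm_num)
  have hc2m : m ≤ c2 := hmin q s hcol2
  -- b2 is the polar form of the two columns
  have hb2' : b2 = α*x₀*q + β*(x₀*s + q*y₀) + γ*y₀*s := by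
    rw [hb2, hb', hq, hs, ← hval]; unfold Q2; ring
  -- determinant identity
  have hdet : m*c2 - b2^2 = α*γ - β^2 := by
    have hid : Q2 α β γ x₀ y₀ * Q2 α β γ q s -
        (α*x₀*q + β*(x₀*s + q*y₀) + γ*y₀*s)^2 = (x₀*s - y₀*q)^2 * (α*γ - β^2) := by
      unfold Q2; ring
    have hdc : x₀*s - y₀*q = 1 := by rw [hq, hs]; linear_combination huv
    rw [← hval, hc2, hb2', hid, hdc]; ring
  refine ⟨m, b2, c2, hm, hk, hc2m, hdet, ⟨x₀, y₀, hne, hval⟩, ?_⟩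
  intro x y
  refine ⟨s*x - q*y, -y₀*x + x₀*y, ?_⟩
  have hdc : x₀*s - y₀*q = 1 := by rw [hq, hs]; linear_combination huv
  have htrans : ∀ X Y : ℤ, Q2 m b2 c2 X Y = Q2 α β γ (x₀*X + q*Y) (y₀*X + s*Y) := by
    intro X Y; rw [← hval, hc2, hb2']; unfold Q2; ring
  rw [htrans]
  have e1 : x₀*(s*x - q*y) + q*(-y₀*x + x₀*y) = x := by linear_combination x * hdc
  have e2 : y₀*(s*x - q*y) + s*(-y₀*x + x₀*y) = y := by linear_combination y * hdc
  rw [e1, e2]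

open scoped Classical in
lemma tern_min (a b c d e f : ℤ)
    (hpos : ∀ x y z : ℤ, ¬(x = 0 ∧ y = 0 ∧ z = 0) → 0 < Q3 a b c d e f x y z) :
    ∃ (m x₀ y₀ z₀ : ℤ), ¬(x₀ = 0 ∧ y₀ = 0 ∧ z₀ = 0) ∧ Q3 a b c d e f x₀ y₀ z₀ = m ∧
      (∀ x y z : ℤ, ¬(x = 0 ∧ y = 0 ∧ z = 0) → m ≤ Q3 a b c d e f x y z) := by
  have hP : ∃ k : ℕ, ∃ x y z : ℤ, ¬(x = 0 ∧ y = 0 ∧ z = 0) ∧ Q3 a b c d e f x y z = (k : ℤ) := by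
    have h := hpos 1 0 0 (by simp)
    exact ⟨(Q3 a b c d e f 1 0 0).toNat, 1, 0, 0, by simp, (Int.toNat_of_nonneg h.le).symm⟩
  obtain ⟨x₀, y₀, z₀, hne, hval⟩ := Nat.find_spec hP
  refine ⟨(Nat.find hP : ℤ), x₀, y₀, z₀, hne, hval, ?_⟩
  intro x y z hxy
  have hv := hpos x y z hxy
  have : Nat.find hP ≤ (Q3 a b c d e f x y z).toNat :=
    Nat.find_min' hP ⟨x, y, z, hxy, (Int.toNat_of_nonneg hv.le).symm⟩
  omega

lemma tern_prim (a b c d e f m x₀ y₀ z₀ : ℤ) (hm : 0 < m)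
    (hne : ¬(x₀ = 0 ∧ y₀ = 0 ∧ z₀ = 0)) (hval : Q3 a b c d e f x₀ y₀ z₀ = m)
    (hmin : ∀ x y z : ℤ, ¬(x = 0 ∧ y = 0 ∧ z = 0) → m ≤ Q3 a b c d e f x y z) :
    Int.gcd x₀ (Int.gcd y₀ z₀) = 1 := by
  set g : ℕ := Int.gcd x₀ (Int.gcd y₀ z₀) with hgdef
  have hg0 : g ≠ 0 := by
    intro h
    rw [hgdef, Int.gcd_eq_zero_iff] at h
    obtain ⟨h1, h2⟩ := h
    have h2' : Int.gcd y₀ z₀ = 0 := by exact_mod_cast h2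
    rw [Int.gcd_eq_zero_iff] at h2'
    exact hne ⟨h1, h2'.1, h2'.2⟩
  have hdx : (g:ℤ) ∣ x₀ := Int.gcd_dvd_left _ _
  have hdyz : (g:ℤ) ∣ (Int.gcd y₀ z₀ : ℤ) := Int.gcd_dvd_right _ _
  have hdy : (g:ℤ) ∣ y₀ := hdyz.trans (Int.gcd_dvd_left _ _)
  have hdz : (g:ℤ) ∣ z₀ := hdyz.trans (Int.gcd_dvd_right _ _)
  obtain ⟨x₁, hx₁⟩ := hdx
  obtain ⟨y₁, hy₁⟩ := hdy
  obtain ⟨z₁, hz₁⟩ := hdz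
  have h1 : ¬(x₁ = 0 ∧ y₁ = 0 ∧ z₁ = 0) := by
    rintro ⟨rfl, rfl, rfl⟩; simp at hx₁ hy₁ hz₁; tauto
  have h2 : m ≤ Q3 a b c d e f x₁ y₁ z₁ := hmin _ _ _ h1
  have h3 : Q3 a b c d e f x₀ y₀ z₀ = (g:ℤ)^2 * Q3 a b c d e f x₁ y₁ z₁ := by
    rw [hx₁, hy₁, hz₁]; unfold Q3; ring
  have hg1 : (1:ℤ) ≤ (g:ℤ) := by exact_mod_cast Nat.one_le_iff_ne_zero.mpr hg0
  have h4 : (g:ℤ)^2 * m ≤ (g:ℤ)^2 * Q3 a b c d e f x₁ y₁ z₁ :=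
    mul_le_mul_of_nonneg_left h2 (by positivity)
  have h6 : (g:ℤ)^2 * m ≤ m := by rw [hval] at h3; linarith [h3 ▸ h4]
  have h8 : (g:ℤ)^2 ≤ 1 := by nlinarith [hm, h6]
  have h7 : (g:ℤ) = 1 := by nlinarith [hg1, h8]
  exact_mod_cast h7

lemma extend_basis (x₀ y₀ z₀ : ℤ) (hg : Int.gcd x₀ (Int.gcd y₀ z₀) = 1) :
    ∃ q₁ q₂ q₃ r₁ r₂ r₃ : ℤ,
      x₀*(q₂*r₃ - q₃*r₂) - q₁*(y₀*r₃ - z₀*r₂) + r₁*(y₀*q₃ - z₀*q₂) = 1 := by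
  by_cases h0 : y₀ = 0 ∧ z₀ = 0
  · obtain ⟨rfl, rfl⟩ := h0
    have : Int.gcd x₀ 0 = 1 := by simpa using hg
    have hx : x₀ = 1 ∨ x₀ = -1 := by
      rcases Int.natAbs_eq x₀ with h | h <;> rw [Int.gcd_zero_right] at this <;> omega
    refine ⟨0, 1, 0, 0, 0, x₀, ?_⟩
    rcases hx with rfl | rfl <;> norm_num
  · set g₂ : ℕ := Int.gcd y₀ z₀ with hg₂
    have hg₂0 : 0 < Int.gcd y₀ z₀ := Int.gcd_pos_iff.mpr (by tauto)
    have hdy : (g₂:ℤ) ∣ y₀ := Int.gcd_dvd_left _ _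
    have hdz : (g₂:ℤ) ∣ z₀ := Int.gcd_dvd_right _ _
    have hy : (g₂:ℤ) * (y₀ / g₂) = y₀ := Int.mul_ediv_cancel' hdy
    have hz : (g₂:ℤ) * (z₀ / g₂) = z₀ := Int.mul_ediv_cancel' hdz
    set q' := y₀ / (g₂:ℤ) with hq'
    set r' := z₀ / (g₂:ℤ) with hr'
    have hco : Int.gcd q' r' = 1 := Int.gcd_div_gcd_div_gcd hg₂0
    obtain ⟨u, w, hbez2⟩ := Int.isCoprime_iff_gcd_eq_one.mpr hco
    obtain ⟨s, t, hbez1⟩ := Int.isCoprime_iff_gcd_eq_one.mpr hg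
    refine ⟨-t, s*q', s*r', 0, -w, u, ?_⟩
    rw [← hy, ← hz]
    linear_combination (s*x₀ + t*(g₂:ℤ)) * hbez2 + hbez1


lemma tern_key (a b c d e f : ℤ)
    (hpos : ∀ x y z : ℤ, ¬(x = 0 ∧ y = 0 ∧ z = 0) → 0 < Q3 a b c d e f x y z) :
    ∃ m b2 c2 d2 e2 f2 : ℤ, 0 < m ∧ 2*|b2| ≤ m ∧ 2*|c2| ≤ m ∧
      det3 m b2 c2 d2 e2 f2 = det3 a b c d e f ∧
      (∀ X Y Z : ℤ, ¬(X = 0 ∧ Y = 0 ∧ Z = 0) → m ≤ Q3 m b2 c2 d2 e2 f2 X Y Z) ∧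
      (∀ x y z : ℤ, ∃ X Y Z : ℤ, Q3 a b c d e f x y z = Q3 m b2 c2 d2 e2 f2 X Y Z) := by
  obtain ⟨m, x₀, y₀, z₀, hne, hval, hmin⟩ := tern_min a b c d e f hpos
  have hm : 0 < m := hval ▸ hpos x₀ y₀ z₀ hne
  obtain ⟨q₁, q₂, q₃, r₁, r₂, r₃, hdetM⟩ :=
    extend_basis x₀ y₀ z₀ (tern_prim a b c d e f m x₀ y₀ z₀ hm hne hval hmin)
  -- first stage coefficients
  set b' := B3 a b c d e f x₀ y₀ z₀ q₁ q₂ q₃ with hb'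
  set c' := B3 a b c d e f x₀ y₀ z₀ r₁ r₂ r₃ with hc'
  set d' := Q3 a b c d e f q₁ q₂ q₃ with hd'
  set e' := B3 a b c d e f q₁ q₂ q₃ r₁ r₂ r₃ with he'
  set f' := Q3 a b c d e f r₁ r₂ r₃ with hf'
  have htr1 : ∀ X Y Z : ℤ, Q3 m b' c' d' e' f' X Y Z
      = Q3 a b c d e f (x₀*X + q₁*Y + r₁*Z) (y₀*X + q₂*Y + r₂*Z) (z₀*X + q₃*Y + r₃*Z) := by
    intro X Y Z; rw [← hval, hb', hc', hd', he', hf']; exact transform3 ..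
  have hdet1 : det3 m b' c' d' e' f' = det3 a b c d e f := by
    rw [← hval, hb', hc', hd', he', hf', det3_transform, hdetM]; ring
  -- second stage : shears
  obtain ⟨k₁, hk₁⟩ := shear_exists m b' hm
  obtain ⟨k₂, hk₂⟩ := shear_exists m c' hm
  set b2 := b' + m*k₁ with hb2
  set c2 := c' + m*k₂ with hc2
  set d2 := Q3 m b' c' d' e' f' k₁ 1 0 with hd2
  set e2 := B3 m b' c' d' e' f' k₁ 1 0 k₂ 0 1 with he2
  set f2 := Q3 m b' c' d' e' f' k₂ 0 1 with hf2
  have hb2B : b2 = B3 m b' c' d' e' f' 1 0 0 k₁ 1 0 := by rw [hb2]; unfold B3; ring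
  have hc2B : c2 = B3 m b' c' d' e' f' 1 0 0 k₂ 0 1 := by rw [hc2]; unfold B3; ring
  have hmQ : m = Q3 m b' c' d' e' f' 1 0 0 := (Q3_e1 ..).symm
  have htr2 : ∀ X Y Z : ℤ, Q3 m b2 c2 d2 e2 f2 X Y Z
      = Q3 m b' c' d' e' f' (X + k₁*Y + k₂*Z) Y Z := by
    intro X Y Z
    calc Q3 m b2 c2 d2 e2 f2 X Y Z
        = Q3 (Q3 m b' c' d' e' f' 1 0 0) (B3 m b' c' d' e' f' 1 0 0 k₁ 1 0)
            (B3 m b' c' d' e' f' 1 0 0 k₂ 0 1) (Q3 m b' c' d' e' f' k₁ 1 0)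
            (B3 m b' c' d' e' f' k₁ 1 0 k₂ 0 1) (Q3 m b' c' d' e' f' k₂ 0 1) X Y Z := by
          rw [← hmQ, ← hb2B, ← hc2B, ← hd2, ← he2, ← hf2]
      _ = Q3 m b' c' d' e' f' (1*X + k₁*Y + k₂*Z) (0*X + 1*Y + 0*Z) (0*X + 0*Y + 1*Z) :=
          transform3 ..
      _ = Q3 m b' c' d' e' f' (X + k₁*Y + k₂*Z) Y Z := by ring_nf
  have hdet2 : det3 m b2 c2 d2 e2 f2 = det3 m b' c' d' e' f' := by
    rw [hmQ, hb2B, hc2B, hd2, he2, hf2, det3_transform]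
    rw [← hmQ]; ring
  refine ⟨m, b2, c2, d2, e2, f2, hm, hk₁, hk₂, by rw [hdet2, hdet1], ?_, ?_⟩
  · intro X Y Z hXYZ
    rw [htr2 X Y Z, htr1]
    apply hmin
    intro ⟨h1, h2, h3⟩
    obtain ⟨hA, hB, hC⟩ := unimod_inj x₀ y₀ z₀ q₁ q₂ q₃ r₁ r₂ r₃ (X + k₁*Y + k₂*Z) Y Z hdetM h1 h2 h3
    rw [hB, hC] at hA
    simp only [mul_zero, add_zero] at hA
    exact hXYZ ⟨hA, hB, hC⟩
  · intro x y z
    obtain ⟨V₁, V₂, V₃, hV1, hV2, hV3⟩ :=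
      unimod_surj x₀ y₀ z₀ q₁ q₂ q₃ r₁ r₂ r₃ x y z hdetM
    refine ⟨V₁ - k₁*V₂ - k₂*V₃, V₂, V₃, ?_⟩
    rw [htr2, show V₁ - k₁*V₂ - k₂*V₃ + k₁*V₂ + k₂*V₃ = V₁ by ring, htr1, hV1, hV2, hV3]

lemma arith_m_eq_one (m m₂ : ℤ) (hm : 0 < m) (h49 : 3*m^2 ≤ 4*m₂) (h34 : 3*m₂^2 ≤ 4*m) :
    m = 1 := by
  rcases lt_or_ge m 2 with h | h
  · omega
  · exfalso
    have hsq : (3*m^2)*(3*m^2) ≤ (4*m₂)*(4*m₂) :=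
      mul_self_le_mul_self (by positivity) h49
    have h27 : 27*m^4 ≤ 64*m := by nlinarith [hsq, h34]
    have hcube : (0:ℤ) ≤ (m - 2) * (m^2 + 2*m + 4) :=
      mul_nonneg (by linarith) (by nlinarith [sq_nonneg m])
    have h8 : (8:ℤ) ≤ m^3 := by nlinarith [hcube]
    have h9 : 8*m ≤ m^4 := by nlinarith [mul_le_mul_of_nonneg_left h8 hm.le]
    linarith

set_option maxHeartbeats 1000000 in
theorem tern_represents (a b c d e f n : ℤ)
    (hpos : ∀ x y z : ℤ, ¬(x = 0 ∧ y = 0 ∧ z = 0) → 0 < Q3 a b c d e f x y z)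
    (hdet : det3 a b c d e f = 1) (x y z : ℤ) (hn : Q3 a b c d e f x y z = n) :
    ∃ X Y Z : ℤ, n = X^2 + Y^2 + Z^2 := by
  obtain ⟨m, b2, c2, d2, e2, f2, hm, hbm, hcm, hdet', hredmin, htrans⟩ := tern_key a b c d e f hpos
  rw [hdet] at hdet'
  set α := m*d2 - b2^2 with hα
  set β := m*e2 - b2*c2 with hβ
  set γ := m*f2 - c2^2 with hγ
  have hcomp : ∀ X Y Z : ℤ, m * Q3 m b2 c2 d2 e2 f2 X Y Z
      = (m*X + b2*Y + c2*Z)^2 + Q2 α β γ Y Z := by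
    intro X Y Z; rw [hα, hβ, hγ]; unfold Q2 Q3; ring
  have hdet2 : α*γ - β^2 = m := by
    have : α*γ - β^2 = m * det3 m b2 c2 d2 e2 f2 := by rw [hα, hβ, hγ]; unfold det3; ring
    rw [this, hdet']; ring
  -- lower bound for the complementary binary form
  have hQ2lb : ∀ Y Z : ℤ, ¬(Y = 0 ∧ Z = 0) → 3*m^2 ≤ 4 * Q2 α β γ Y Z := by
    intro Y Z hYZ
    obtain ⟨X, hX⟩ := shear_exists m (b2*Y + c2*Z) hm
    have h1 : m ≤ Q3 m b2 c2 d2 e2 f2 X Y Z := hredmin X Y Z (by tauto)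
    have h2 : m*m ≤ m * Q3 m b2 c2 d2 e2 f2 X Y Z := mul_le_mul_of_nonneg_left h1 hm.le
    have h3 : 4*(b2*Y + c2*Z + m*X)^2 ≤ m^2 := by
      have h5 := mul_self_le_mul_self (by positivity) hX
      nlinarith [sq_abs (b2*Y + c2*Z + m*X), h5]
    have h4 := hcomp X Y Z
    nlinarith [h2, h3, h4]
  have hQ2pos : ∀ Y Z : ℤ, ¬(Y = 0 ∧ Z = 0) → 0 < Q2 α β γ Y Z := by
    intro Y Z h; have := hQ2lb Y Z h; nlinarith [hm]
  obtain ⟨m₂, b₂', c₂', hm₂, hb₂', hc₂', hdetb, ⟨xm, ym, hnem, hvalm⟩, htransb⟩ :=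
    bin_key α β γ hQ2pos
  -- m = 1
  have h49 : 3*m^2 ≤ 4*m₂ := by rw [← hvalm]; exact hQ2lb xm ym hnem
  rw [hdet2] at hdetb
  have h34 : 3*m₂^2 ≤ 4*m := by
    have hbsq : 4*b₂'^2 ≤ m₂^2 := by
      have h5 := mul_self_le_mul_self (by positivity) hb₂'
      nlinarith [sq_abs b₂', h5]
    have h6 : m₂*m₂ ≤ m₂*c₂' := mul_le_mul_of_nonneg_left hc₂' hm₂.le
    nlinarith [hbsq, h6, hdetb]
  have hm1 : m = 1 := arith_m_eq_one m m₂ hm h49 h34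
  subst hm1
  -- reduce it : m₂ = 1, b₂' = 0, c₂' = 1
  rw [mul_one] at h34
  have hm₂1 : m₂ = 1 := by nlinarith [h34, hm₂]
  subst hm₂1
  have hb0 : b₂' = 0 := by
    have h5 : |b₂'| = 0 := le_antisymm (by linarith [hb₂']) (abs_nonneg _)
    exact abs_eq_zero.mp h5
  subst hb0
  have hc1 : c₂' = 1 := by linarith [hdetb]
  subst hc1
  -- assemble
  obtain ⟨X, Y, Z, hXYZ⟩ := htrans x y z
  have hfin := hcomp X Y Z
  rw [one_mul] at hfin
  obtain ⟨A, B, hAB⟩ := htransb Y Z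
  refine ⟨X + b2*Y + c2*Z, A, B, ?_⟩
  rw [← hn, hXYZ, hfin, hAB]
  unfold Q2; ring

set_option maxHeartbeats 1000000 in
theorem sum_three_squares_mod_four (n : ℕ) (hn : n % 4 = 1) :
    ∃ X Y Z : ℕ, n = X^2 + Y^2 + Z^2 := by
  rcases eq_or_lt_of_le (show 1 ≤ n by omega) with h1 | h1
  · exact ⟨1, 0, 0, by omega⟩
  have hn5 : 5 ≤ n := by omega
  haveI : NeZero (4*n) := ⟨by omega⟩
  -- Dirichlet: a prime q ≡ 2n-1 (mod 4n)
  have hco : Nat.Coprime (2*n-1) (4*n) := by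
    rw [← Nat.isCoprime_iff_coprime]
    refine ⟨(2*(n:ℤ)-1), (1-(n:ℤ)), ?_⟩
    have hc : ((2*n-1 : ℕ) : ℤ) = 2*(n:ℤ)-1 := by push_cast [Nat.cast_sub (by omega : 1 ≤ 2*n)]; ring
    rw [hc]; push_cast; ring
  have hunit : IsUnit ((2*n-1 : ℕ) : ZMod (4*n)) := (ZMod.isUnit_iff_coprime _ _).mpr hco
  obtain ⟨q, hq_gt, hq_prime, hq_mod⟩ := Nat.forall_exists_prime_gt_and_eq_mod hunit (4*n)
  haveI : Fact q.Prime := ⟨hq_prime⟩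
  have hmod : q ≡ 2*n-1 [MOD 4*n] := (ZMod.natCast_eq_natCast_iff _ _ _).mp hq_mod
  have hmod4 : q % 4 = 1 := by
    have h := Nat.ModEq.of_dvd (dvd_mul_right 4 n) hmod
    unfold Nat.ModEq at h; omega
  have hndvd : n ∣ q + 1 := by
    have h := (Nat.ModEq.of_dvd (dvd_mul_left n 4) hmod).add_right 1
    have h2 : (2*n-1)+1 = 2*n := by omega
    rw [h2] at h
    have h3 : 2*n ≡ 0 [MOD n] := Nat.modEq_zero_iff_dvd.mpr ⟨2, by ring⟩
    exact Nat.modEq_zero_iff_dvd.mp (h.trans h3)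
  have hqodd : Odd q := by
    rcases Nat.even_or_odd q with h | h
    · exfalso; obtain ⟨k, hk⟩ := h; omega
    · exact h
  have hnodd : Odd n := by refine Nat.odd_iff.mpr (by omega)
  have hqn : q > n := by omega
  -- Jacobi symbol computation : -n is a square mod q
  have hJ : J((-n : ℤ) | q) = 1 := by
    have e1 : ((-n : ℤ)) = (-1) * (n : ℤ) := by ring
    rw [e1, jacobiSym.mul_left, jacobiSym.at_neg_one hqodd, ZMod.χ₄_nat_one_mod_four hmod4]
    have e2 : J((n:ℤ) | q) = J((q:ℤ) | n) := jacobiSym.quadratic_reciprocity_one_mod_four hn hqodd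
    have e3 : J((q:ℤ) | n) = J((-1 : ℤ) | n) := by
      apply jacobiSym.mod_left'
      have hdvd : ((n:ℤ)) ∣ (q:ℤ) + 1 := by
        exact_mod_cast Int.natCast_dvd_natCast.mpr hndvd
      have h2 : ((n:ℤ)) ∣ (-1) - (q:ℤ) := by
        have : (-1 : ℤ) - q = -((q:ℤ)+1) := by ring
        rw [this]; exact dvd_neg.mpr hdvd
      exact Int.modEq_iff_dvd.mpr h2
    rw [e2, e3, jacobiSym.at_neg_one hnodd, ZMod.χ₄_nat_one_mod_four hn]
    ring
  -- -n is a square mod q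
  have hnz0 : (n : ZMod q) ≠ 0 := by
    intro h
    rw [ZMod.natCast_eq_zero_iff] at h
    have := Nat.le_of_dvd (by omega) h
    omega
  have hnz : ((-(n:ℤ) : ℤ) : ZMod q) ≠ 0 := by
    push_cast
    exact fun h => hnz0 (neg_eq_zero.mp h)
  have hsq : IsSquare ((-(n:ℤ) : ℤ) : ZMod q) := by
    rw [← legendreSym.eq_one_iff q hnz, jacobiSym.legendreSym.to_jacobiSym]
    exact_mod_cast hJ
  obtain ⟨s, hs⟩ := hsq
  have hs2 : s * s = -(n : ZMod q) := by
    rw [← hs]; push_cast; ring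
  have hr0 : (n : ZMod q) * (s * (n : ZMod q)⁻¹)^2 = -1 := by
    field_simp
    rw [pow_two, hs2]
  set r0 : ZMod q := s * (n : ZMod q)⁻¹ with hr0def
  set r : ℤ := (r0.val : ℤ) with hrdef
  have hrr : ((n * r^2 + 1 : ℤ) : ZMod q) = 0 := by
    rw [hrdef]
    push_cast
    rw [ZMod.natCast_val, ZMod.cast_id, hr0]
    ring
  obtain ⟨cc, hcc⟩ := (ZMod.intCast_zmod_eq_zero_iff_dvd _ _).mp hrr
  -- hcc : n*r^2 + 1 = q * cc
  obtain ⟨k, hk⟩ := hndvd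
  have hb' : (q:ℤ) + 1 = (n:ℤ) * (k:ℤ) := by exact_mod_cast hk
  have hq0 : (0:ℤ) < (q:ℤ) := by exact_mod_cast hq_prime.pos
  have hn0 : (0:ℤ) < (n:ℤ) := by exact_mod_cast (by omega : 0 < n)
  have hdetF : det3 (n:ℤ) 1 0 (k:ℤ) r cc = 1 := by
    unfold det3
    linear_combination (-cc) * hb' - hcc
  have hQid : ∀ x y z : ℤ, (q:ℤ)*(n:ℤ)*Q3 (n:ℤ) 1 0 (k:ℤ) r cc x y z
      = (q:ℤ)*((n:ℤ)*x+y)^2 + ((q:ℤ)*y+(n:ℤ)*r*z)^2 + (n:ℤ)*z^2 := by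
    intro x y z
    unfold Q3
    linear_combination (-(q:ℤ)*y^2) * hb' + (-(n:ℤ)*z^2) * hcc
  have hposF : ∀ x y z : ℤ, ¬(x = 0 ∧ y = 0 ∧ z = 0) →
      0 < Q3 (n:ℤ) 1 0 (k:ℤ) r cc x y z := by
    intro x y z hne
    by_contra hle
    push_neg at hle
    have h1 : (q:ℤ)*((n:ℤ)*x+y)^2 + ((q:ℤ)*y+(n:ℤ)*r*z)^2 + (n:ℤ)*z^2 ≤ 0 := by
      rw [← hQid]
      have : (0:ℤ) < (q:ℤ)*(n:ℤ) := by positivity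
      nlinarith [this, hle]
    have hz2 : z^2 = 0 := by
      nlinarith [sq_nonneg ((n:ℤ)*x+y), sq_nonneg ((q:ℤ)*y+(n:ℤ)*r*z), sq_nonneg z,
        mul_nonneg hq0.le (sq_nonneg ((n:ℤ)*x+y))]
    have hz : z = 0 := by
      have := sq_eq_zero_iff.mp hz2
      exact this
    subst hz
    have hy2 : ((q:ℤ)*y)^2 ≤ 0 := by nlinarith [sq_nonneg ((n:ℤ)*x+y), mul_nonneg hq0.le (sq_nonneg ((n:ℤ)*x+y))]
    have hy : y = 0 := by
      have h2 : ((q:ℤ)*y)^2 = 0 := le_antisymm hy2 (sq_nonneg _)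
      have h3 := sq_eq_zero_iff.mp h2
      rcases mul_eq_zero.mp h3 with h4 | h4
      · exfalso; omega
      · exact h4
    subst hy
    have hx2 : (q:ℤ)*((n:ℤ)*x)^2 ≤ 0 := by nlinarith []
    have hx : x = 0 := by
      have h2 : ((n:ℤ)*x)^2 ≤ 0 := by nlinarith [hq0]
      have h3 := sq_eq_zero_iff.mp (le_antisymm h2 (sq_nonneg _))
      rcases mul_eq_zero.mp h3 with h4 | h4
      · exfalso; omega
      · exact h4
    exact hne ⟨hx, rfl, rfl⟩
  have hval : Q3 (n:ℤ) 1 0 (k:ℤ) r cc 1 0 0 = (n:ℤ) := by unfold Q3; ring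
  obtain ⟨X, Y, Z, hXYZ⟩ := tern_represents (n:ℤ) 1 0 (k:ℤ) r cc (n:ℤ) hposF hdetF 1 0 0 hval
  refine ⟨X.natAbs, Y.natAbs, Z.natAbs, ?_⟩
  have hX : ((X.natAbs : ℤ))^2 = X^2 := by rw [← Int.abs_eq_natAbs, sq_abs]
  have hY : ((Y.natAbs : ℤ))^2 = Y^2 := by rw [← Int.abs_eq_natAbs, sq_abs]
  have hZ : ((Z.natAbs : ℤ))^2 = Z^2 := by rw [← Int.abs_eq_natAbs, sq_abs]
  have : (n:ℤ) = ((X.natAbs:ℤ))^2 + ((Y.natAbs:ℤ))^2 + ((Z.natAbs:ℤ))^2 := by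
    rw [hX, hY, hZ]; exact hXYZ
  exact_mod_cast this

lemma parity_case (N X Y Z : ℕ) (h : 4*N+1 = X^2+Y^2+Z^2) :
    ∃ A B C : ℕ, N = A^2/4 + B^2/4 + C^2/4 := by
  have sq_ev : ∀ t u : ℕ, t = u + u → t^2 = 4*(u*u) := by intro t u ht; subst ht; ring
  have sq_od : ∀ t u : ℕ, t = 2*u+1 → t^2 = 4*(u*u+u)+1 := by intro t u ht; subst ht; ring
  rcases Nat.even_or_odd X with ⟨u, hu⟩ | ⟨u, hu⟩ <;>
    rcases Nat.even_or_odd Y with ⟨v, hv⟩ | ⟨v, hv⟩ <;>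
    rcases Nat.even_or_odd Z with ⟨w, hw⟩ | ⟨w, hw⟩
  -- eee
  · rw [sq_ev X u hu, sq_ev Y v hv, sq_ev Z w hw] at h; omega
  -- eeo
  · refine ⟨Z, X, Y, ?_⟩
    rw [sq_ev X u hu, sq_ev Y v hv, sq_od Z w hw] at h
    rw [sq_ev X u hu, sq_ev Y v hv, sq_od Z w hw]
    omega
  -- eoe
  · refine ⟨Y, X, Z, ?_⟩
    rw [sq_ev X u hu, sq_od Y v hv, sq_ev Z w hw] at h
    rw [sq_ev X u hu, sq_od Y v hv, sq_ev Z w hw]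
    omega
  -- eoo
  · rw [sq_ev X u hu, sq_od Y v hv, sq_od Z w hw] at h; omega
  -- oee
  · refine ⟨X, Y, Z, ?_⟩
    rw [sq_od X u hu, sq_ev Y v hv, sq_ev Z w hw] at h
    rw [sq_od X u hu, sq_ev Y v hv, sq_ev Z w hw]
    omega
  -- oeo
  · rw [sq_od X u hu, sq_ev Y v hv, sq_od Z w hw] at h; omega
  -- ooe
  · rw [sq_od X u hu, sq_od Y v hv, sq_ev Z w hw] at h; omega
  -- ooo
  · rw [sq_od X u hu, sq_od Y v hv, sq_od Z w hw] at h; omega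


theorem stmt_1 (N : ℕ) :
    ∃ A B C : ℕ, N = A ^ 2 / 4 + B ^ 2 / 4 + C ^ 2 / 4 := by
  obtain ⟨X, Y, Z, h⟩ := sum_three_squares_mod_four (4*N+1) (by omega)
  exact parity_case N X Y Z h
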